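/- Let f : ℝ^d → ℝ be thrice differentiable whose Hessian is H-Lipschitz, let θ* satisfy ∇f(θ*) = 0 with ∇²f(θ*) positive semidefinite, and let ρ be a mean-zero probability measure on ℝ^d with E_{θ∼ρ}[θθᵀ] = c²·I for some c ≥ ‖θ*‖₂. Then EGOP(f) = H(θ*) + E_f(θ*), where H(θ*) := ∇²f(θ*)·(c²·I + θ*(θ*)ᵀ)·∇²f(θ*)ᵀ is positive semidefinite and satisfies c²·∇²f(θ*)∇²f(θ*)ᵀ ⪯ H(θ*) ⪯ 2c²·∇²f(θ*)∇²f(θ*)ᵀ (Löwner order), and E_f(θ*) satisfies |⟨v, E_f(θ*)·v⟩| ≤ (2√d·H·λ_max(∇²f(θ*))·M₃ + d·H²·M₄)·‖v‖₂² for all v ∈ ℝ^d. -/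

import Mathlib

open MeasureTheory Matrix
open scoped RealInnerProductSpace

noncomputable section

variable {d : ℕ}

/-- Expected gradient outer product matrix of `f` w.r.t. measure `ρ`. -/
def EGOP (f : EuclideanSpace ℝ (Fin d) → ℝ) (ρ : Measure (EuclideanSpace ℝ (Fin d))) :
    Matrix (Fin d) (Fin d) ℝ :=
  fun i j => ∫ θ, gradient f θ i * gradient f θ j ∂ρ

/-- Hessian matrix of `f` at `θ`. -/
def hessMat (f : EuclideanSpace ℝ (Fin d) → ℝ) (θ : EuclideanSpace ℝ (Fin d)) :
    Matrix (Fin d) (Fin d) ℝ :=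
  fun i j => fderiv ℝ (gradient f) θ (EuclideanSpace.single j (1:ℝ)) i

/-- ℓ₂ operator (spectral) norm of a matrix. -/
def opNormM (M : Matrix (Fin d) (Fin d) ℝ) : ℝ :=
  ‖LinearMap.toContinuousLinearMap (Matrix.toEuclideanLin M)‖

/-- Largest eigenvalue (Rayleigh characterization) of a symmetric matrix. -/
def lambdaMax (M : Matrix (Fin d) (Fin d) ℝ) : ℝ :=
  sSup {r : ℝ | ∃ v : EuclideanSpace ℝ (Fin d), ‖v‖ = 1 ∧ r = ⟪v, Matrix.toEuclideanLin M v⟫}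

/-- The Hessian of `f` is `H`-Lipschitz. -/
def HessLipschitz (f : EuclideanSpace ℝ (Fin d) → ℝ) (H : ℝ) : Prop :=
  ∀ θ₁ θ₂ : EuclideanSpace ℝ (Fin d), opNormM (hessMat f θ₁ - hessMat f θ₂) ≤ H * ‖θ₁ - θ₂‖

/-- Coordinate-wise smoothness with constants `L` within the set `Θ`. -/
def CoordSmoothOn (f : EuclideanSpace ℝ (Fin d) → ℝ) (L : Fin d → ℝ)
    (Θ : Set (EuclideanSpace ℝ (Fin d))) : Prop :=
  ∀ θ₁ ∈ Θ, ∀ θ₂ ∈ Θ,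
    |f θ₁ - f θ₂ - ⟪gradient f θ₂, θ₁ - θ₂⟫| ≤ (1/2) * ∑ i, L i * (θ₁ i - θ₂ i)^2

/-- Coordinate-wise smoothness with constants `L` on all of ℝ^d. -/
def CoordSmooth (f : EuclideanSpace ℝ (Fin d) → ℝ) (L : Fin d → ℝ) : Prop :=
  CoordSmoothOn f L Set.univ

section Helpers

lemma euclid_apply (M : Matrix (Fin d) (Fin d) ℝ) (x : EuclideanSpace ℝ (Fin d)) (i : Fin d) :
    Matrix.toEuclideanLin M x i = ∑ j, M i j * x j := by
  simp [Matrix.toEuclideanLin_apply, Matrix.mulVec, dotProduct]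

lemma inner_euclid (x y : EuclideanSpace ℝ (Fin d)) : ⟪x, y⟫ = ∑ i, x i * y i := by
  simp [PiLp.inner_apply, RCLike.inner_apply, mul_comm]

lemma inner_toEuclideanLin_eq_dot (M : Matrix (Fin d) (Fin d) ℝ) (x y : EuclideanSpace ℝ (Fin d)) :
    ⟪x, Matrix.toEuclideanLin M y⟫ = dotProduct (fun i => x i) (M *ᵥ (fun i => y i)) := by
  simp [inner_euclid, euclid_apply, dotProduct, Matrix.mulVec]

lemma real_conjT (M : Matrix (Fin d) (Fin d) ℝ) : Mᴴ = Mᵀ := by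
  ext i j; simp [Matrix.conjTranspose_apply]

lemma psd_vecMulVec (a : Fin d → ℝ) : (Matrix.vecMulVec a a).PosSemidef := by
  refine Matrix.posSemidef_iff_dotProduct_mulVec.mpr ⟨?_, ?_⟩
  · ext i j; simp [Matrix.conjTranspose_apply, Matrix.vecMulVec_apply, mul_comm]
  · intro x
    have : dotProduct (star x) ((Matrix.vecMulVec a a) *ᵥ x) = (∑ i, a i * x i)^2 := by
      simp [dotProduct, Matrix.mulVec, Matrix.vecMulVec_apply, Finset.mul_sum,
        Finset.sum_mul, pow_two]
      rw [Finset.sum_comm]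
      exact Finset.sum_congr rfl fun i _ => Finset.sum_congr rfl fun j _ => by ring
    rw [this]; positivity

lemma psd_smul_one {r : ℝ} (hr : 0 ≤ r) : (r • (1 : Matrix (Fin d) (Fin d) ℝ)).PosSemidef := by
  refine Matrix.posSemidef_iff_dotProduct_mulVec.mpr ⟨?_, ?_⟩
  · ext i j; by_cases h : i = j <;> simp [Matrix.conjTranspose_apply, Matrix.one_apply, h, eq_comm]
  · intro x
    simp only [Matrix.smul_mulVec, Matrix.one_mulVec, dotProduct_smul]
    have : dotProduct (star x) x = ∑ i, x i ^ 2 := by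
      simp [dotProduct, pow_two]
    rw [smul_eq_mul, this]; positivity

lemma norm_sq_euclid (x : EuclideanSpace ℝ (Fin d)) : ‖x‖^2 = ∑ i, x i ^ 2 := by
  rw [EuclideanSpace.norm_eq, Real.sq_sqrt (by positivity)]
  simp [Real.norm_eq_abs, sq_abs]

lemma psd_c_sub_outer {c : ℝ} (θs : EuclideanSpace ℝ (Fin d)) (hc : ‖θs‖ ≤ c) :
    (c ^ 2 • (1 : Matrix (Fin d) (Fin d) ℝ) - Matrix.vecMulVec θs θs).PosSemidef := by
  refine Matrix.posSemidef_iff_dotProduct_mulVec.mpr ⟨?_, ?_⟩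
  · ext i j
    by_cases h : i = j <;>
      simp [Matrix.conjTranspose_apply, Matrix.sub_apply, Matrix.one_apply, h, eq_comm,
        Matrix.vecMulVec_apply, mul_comm]
  · intro x
    have key : dotProduct (star x) ((c ^ 2 • (1 : Matrix (Fin d) (Fin d) ℝ) -
        Matrix.vecMulVec θs θs) *ᵥ x) = c^2 * (∑ i, x i ^2) - (∑ i, θs i * x i)^2 := by
      simp only [Matrix.sub_mulVec, dotProduct_sub, Matrix.smul_mulVec,
        Matrix.one_mulVec, dotProduct_smul, star_trivial]
      congr 1
      · simp [dotProduct, Finset.mul_sum, pow_two, mul_comm, mul_assoc, mul_left_comm]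
      · simp [dotProduct, Matrix.mulVec, Matrix.vecMulVec_apply, pow_two,
          Finset.mul_sum, Finset.sum_mul]
        rw [Finset.sum_comm]
        exact Finset.sum_congr rfl fun i _ => Finset.sum_congr rfl fun j _ => by ring
    rw [key, sub_nonneg]
    calc (∑ i, θs i * x i)^2 ≤ (∑ i, θs i ^2) * (∑ i, x i ^2) :=
          Finset.sum_mul_sq_le_sq_mul_sq _ _ _
      _ ≤ c^2 * (∑ i, x i ^2) := by
          apply mul_le_mul_of_nonneg_right _ (by positivity)
          rw [← norm_sq_euclid]
          have h0 : (0:ℝ) ≤ ‖θs‖ := norm_nonneg _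
          nlinarith

lemma psd_add {M N : Matrix (Fin d) (Fin d) ℝ} (hM : M.PosSemidef) (hN : N.PosSemidef) :
    (M + N).PosSemidef := by
  refine Matrix.posSemidef_iff_dotProduct_mulVec.mpr ⟨?_, fun x => ?_⟩
  · unfold Matrix.IsHermitian
    rw [Matrix.conjTranspose_add, hM.1, hN.1]
  · rw [Matrix.add_mulVec, dotProduct_add]
    exact add_nonneg (hM.dotProduct_mulVec_nonneg x) (hN.dotProduct_mulVec_nonneg x)

/-- the three PSD claims -/
lemma psd_all (A : Matrix (Fin d) (Fin d) ℝ) {c : ℝ}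
    (θs : EuclideanSpace ℝ (Fin d)) (hc : ‖θs‖ ≤ c) :
    (A * (c ^ 2 • (1 : Matrix (Fin d) (Fin d) ℝ) + Matrix.vecMulVec θs θs) * Aᵀ).PosSemidef ∧
    (A * (c ^ 2 • (1 : Matrix (Fin d) (Fin d) ℝ) + Matrix.vecMulVec θs θs) * Aᵀ -
        c ^ 2 • (A * Aᵀ)).PosSemidef ∧
    ((2 * c ^ 2) • (A * Aᵀ) -
        A * (c ^ 2 • (1 : Matrix (Fin d) (Fin d) ℝ) + Matrix.vecMulVec θs θs) * Aᵀ).PosSemidef := by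
  have hc0 : (0:ℝ) ≤ c := le_trans (norm_nonneg _) hc
  have hc2 : (0:ℝ) ≤ c ^ 2 := by positivity
  have hT : Aᵀ = Aᴴ := (real_conjT A).symm
  refine ⟨?_, ?_, ?_⟩
  · rw [hT]
    exact (psd_add (psd_smul_one hc2) (psd_vecMulVec θs)).mul_mul_conjTranspose_same A
  · have : A * (c ^ 2 • (1 : Matrix (Fin d) (Fin d) ℝ) + Matrix.vecMulVec θs θs) * Aᵀ -
        c ^ 2 • (A * Aᵀ) = A * Matrix.vecMulVec θs θs * Aᵀ := by
      rw [Matrix.mul_add, Matrix.add_mul]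
      have : A * (c ^ 2 • (1 : Matrix (Fin d) (Fin d) ℝ)) * Aᵀ = c ^ 2 • (A * Aᵀ) := by
        rw [Matrix.mul_smul, Matrix.mul_one, Matrix.smul_mul]
      rw [this]; abel
    rw [this, hT]
    exact (psd_vecMulVec θs).mul_mul_conjTranspose_same A
  · have : (2 * c ^ 2) • (A * Aᵀ) -
        A * (c ^ 2 • (1 : Matrix (Fin d) (Fin d) ℝ) + Matrix.vecMulVec θs θs) * Aᵀ =
        A * (c ^ 2 • (1 : Matrix (Fin d) (Fin d) ℝ) - Matrix.vecMulVec θs θs) * Aᵀ := by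
      rw [Matrix.mul_add, Matrix.add_mul, Matrix.mul_sub, Matrix.sub_mul]
      have h1 : A * (c ^ 2 • (1 : Matrix (Fin d) (Fin d) ℝ)) * Aᵀ = c ^ 2 • (A * Aᵀ) := by
        rw [Matrix.mul_smul, Matrix.mul_one, Matrix.smul_mul]
      rw [h1, two_mul, add_smul]; abel
    rw [this, hT]
    exact (psd_c_sub_outer θs hc).mul_mul_conjTranspose_same A

lemma lam_bdd (M : Matrix (Fin d) (Fin d) ℝ) :
    BddAbove {r : ℝ | ∃ v : EuclideanSpace ℝ (Fin d), ‖v‖ = 1 ∧ r = ⟪v, Matrix.toEuclideanLin M v⟫} := by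
  refine ⟨‖LinearMap.toContinuousLinearMap (Matrix.toEuclideanLin M)‖, ?_⟩
  rintro r ⟨v, hv, rfl⟩
  calc ⟪v, Matrix.toEuclideanLin M v⟫ ≤ ‖v‖ * ‖Matrix.toEuclideanLin M v‖ := real_inner_le_norm _ _
    _ = ‖(LinearMap.toContinuousLinearMap (Matrix.toEuclideanLin M)) v‖ := by
        rw [hv, one_mul]; rfl
    _ ≤ ‖LinearMap.toContinuousLinearMap (Matrix.toEuclideanLin M)‖ * ‖v‖ :=
        ContinuousLinearMap.le_opNorm _ _
    _ = _ := by rw [hv, mul_one]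

lemma lam_quad {M : Matrix (Fin d) (Fin d) ℝ} (x : EuclideanSpace ℝ (Fin d)) :
    ⟪x, Matrix.toEuclideanLin M x⟫ ≤ lambdaMax M * ‖x‖ ^ 2 := by
  rcases eq_or_ne x 0 with rfl | hx
  · simp
  · have hnx : (0:ℝ) < ‖x‖ := norm_pos_iff.mpr hx
    set u : EuclideanSpace ℝ (Fin d) := ‖x‖⁻¹ • x with hu
    have hun : ‖u‖ = 1 := by
      rw [hu, norm_smul, norm_inv, norm_norm, inv_mul_cancel₀ hnx.ne']
    have hmem : ⟪u, Matrix.toEuclideanLin M u⟫ ∈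
        {r : ℝ | ∃ v : EuclideanSpace ℝ (Fin d), ‖v‖ = 1 ∧ r = ⟪v, Matrix.toEuclideanLin M v⟫} :=
      ⟨u, hun, rfl⟩
    have hle := le_csSup (lam_bdd M) hmem
    have hval : ⟪u, Matrix.toEuclideanLin M u⟫ = ‖x‖⁻¹ ^ 2 * ⟪x, Matrix.toEuclideanLin M x⟫ := by
      rw [hu, _root_.map_smul, real_inner_smul_left, real_inner_smul_right]
      ring
    rw [hval] at hle
    have := mul_le_mul_of_nonneg_right hle (by positivity : (0:ℝ) ≤ ‖x‖ ^ 2)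
    calc ⟪x, Matrix.toEuclideanLin M x⟫
        = ‖x‖⁻¹ ^ 2 * ⟪x, Matrix.toEuclideanLin M x⟫ * ‖x‖ ^ 2 := by
          field_simp
      _ ≤ lambdaMax M * ‖x‖ ^ 2 := this

lemma lam_nonneg {M : Matrix (Fin d) (Fin d) ℝ} (hd : 0 < d) (hM : M.PosSemidef) :
    0 ≤ lambdaMax M := by
  set u : EuclideanSpace ℝ (Fin d) := EuclideanSpace.single ⟨0, hd⟩ (1:ℝ) with hu
  have hun : ‖u‖ = 1 := by rw [hu, EuclideanSpace.norm_single, norm_one]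
  have h0 : 0 ≤ ⟪u, Matrix.toEuclideanLin M u⟫ := by
    rw [inner_toEuclideanLin_eq_dot]
    simpa using hM.dotProduct_mulVec_nonneg (fun i => u i)
  exact le_trans h0 (le_csSup (lam_bdd M) ⟨u, hun, rfl⟩)

lemma inner_sym {M : Matrix (Fin d) (Fin d) ℝ} (hM : M.IsHermitian)
    (x y : EuclideanSpace ℝ (Fin d)) :
    ⟪Matrix.toEuclideanLin M x, y⟫ = ⟪x, Matrix.toEuclideanLin M y⟫ := by
  have hMt : Mᵀ = M := by rw [← real_conjT]; exact hM
  rw [real_inner_comm, inner_toEuclideanLin_eq_dot, inner_toEuclideanLin_eq_dot,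
    dotProduct_mulVec]
  rw [show (fun i => y i) ᵥ* M = M *ᵥ (fun i => y i) by rw [← Matrix.mulVec_transpose, hMt]]
  exact dotProduct_comm _ _

lemma rayleigh_abs {M : Matrix (Fin d) (Fin d) ℝ} (hd : 0 < d) (hM : M.PosSemidef)
    (x y : EuclideanSpace ℝ (Fin d)) :
    |⟪Matrix.toEuclideanLin M x, y⟫| ≤ lambdaMax M * ‖x‖ * ‖y‖ := by
  have hnn : ∀ z : EuclideanSpace ℝ (Fin d), 0 ≤ ⟪z, Matrix.toEuclideanLin M z⟫ := by
    intro z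
    rw [inner_toEuclideanLin_eq_dot]
    simpa using hM.dotProduct_mulVec_nonneg (fun i => z i)
  have hdisc : ∀ t : ℝ, 0 ≤ ⟪y, Matrix.toEuclideanLin M y⟫ * (t * t) +
      (2 * ⟪Matrix.toEuclideanLin M x, y⟫) * t + ⟪x, Matrix.toEuclideanLin M x⟫ := by
    intro t
    have := hnn (x + t • y)
    rw [map_add, _root_.map_smul, inner_add_left, inner_add_right, inner_add_right,
      real_inner_smul_left, real_inner_smul_left, real_inner_smul_right,
      real_inner_smul_right] at this
    have hsym := inner_sym hM.1 x y
    have hsym2 : ⟪y, Matrix.toEuclideanLin M x⟫ = ⟪x, Matrix.toEuclideanLin M y⟫ := by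
      rw [real_inner_comm]; exact hsym
    rw [hsym2] at this
    rw [hsym]
    ring_nf at this ⊢
    linarith
  have hd2 := discrim_le_zero hdisc
  rw [discrim] at hd2
  have hsq : ⟪Matrix.toEuclideanLin M x, y⟫ ^ 2 ≤
      ⟪x, Matrix.toEuclideanLin M x⟫ * ⟪y, Matrix.toEuclideanLin M y⟫ := by nlinarith
  have hqx := lam_quad (M := M) x
  have hqy := lam_quad (M := M) y
  have hlam := lam_nonneg hd hM
  have h2 : ⟪Matrix.toEuclideanLin M x, y⟫ ^ 2 ≤ (lambdaMax M * ‖x‖ * ‖y‖) ^ 2 := by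
    nlinarith [hnn x, hnn y, norm_nonneg x, norm_nonneg y, sq_nonneg (‖x‖*‖y‖)]
  calc |⟪Matrix.toEuclideanLin M x, y⟫| = Real.sqrt (⟪Matrix.toEuclideanLin M x, y⟫ ^ 2) :=
        (Real.sqrt_sq_eq_abs _).symm
    _ ≤ Real.sqrt ((lambdaMax M * ‖x‖ * ‖y‖) ^ 2) := Real.sqrt_le_sqrt h2
    _ = lambdaMax M * ‖x‖ * ‖y‖ := Real.sqrt_sq (by positivity)

lemma hess_clm (f : EuclideanSpace ℝ (Fin d) → ℝ) (x : EuclideanSpace ℝ (Fin d)) :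
    LinearMap.toContinuousLinearMap (Matrix.toEuclideanLin (hessMat f x)) =
      fderiv ℝ (gradient f) x := by
  apply ContinuousLinearMap.coe_injective
  rw [LinearMap.coe_toContinuousLinearMap]
  apply Module.Basis.ext (PiLp.basisFun 2 ℝ (Fin d))
  intro j
  have hb : (PiLp.basisFun 2 ℝ (Fin d)) j = EuclideanSpace.single j (1:ℝ) := by
    ext i
    simp [PiLp.basisFun_apply, EuclideanSpace.single_apply, Pi.single_apply, eq_comm]
  rw [hb]
  ext i
  rw [euclid_apply]
  simp only [hessMat]
  rw [Finset.sum_eq_single j]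
  · simp [EuclideanSpace.single_apply]
  · intro b _ hbj
    simp [EuclideanSpace.single_apply, hbj]
  · intro h; exact absurd (Finset.mem_univ j) h

lemma grad_contDiff (f : EuclideanSpace ℝ (Fin d) → ℝ) (hf : ContDiff ℝ 3 f) :
    ContDiff ℝ 2 (gradient f) := by
  have h1 : ContDiff ℝ 2 (fderiv ℝ f) := hf.fderiv_right (by norm_num)
  have h2 : gradient f = fun x =>
      (InnerProductSpace.toDual ℝ (EuclideanSpace ℝ (Fin d))).symm (fderiv ℝ f x) := rfl
  rw [h2]
  exact ((InnerProductSpace.toDual ℝ (EuclideanSpace ℝ (Fin d))).symm.contDiff).comp h1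

lemma fderiv_diff_norm (f : EuclideanSpace ℝ (Fin d) → ℝ) (x y : EuclideanSpace ℝ (Fin d)) :
    ‖fderiv ℝ (gradient f) x - fderiv ℝ (gradient f) y‖ = opNormM (hessMat f x - hessMat f y) := by
  rw [opNormM, ← hess_clm f x, ← hess_clm f y, map_sub, map_sub]

lemma taylor_grad (f : EuclideanSpace ℝ (Fin d) → ℝ) (H : ℝ) (hH0 : 0 ≤ H)
    (hf : ContDiff ℝ 3 f) (hH : HessLipschitz f H) (θs θ : EuclideanSpace ℝ (Fin d))
    (hgrad : gradient f θs = 0) :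
    ‖gradient f θ - fderiv ℝ (gradient f) θs (θ - θs)‖ ≤ H * ‖θ - θs‖ ^ 2 := by
  have hgdiff : Differentiable ℝ (gradient f) :=
    (grad_contDiff f hf).differentiable (by norm_num)
  have hmem1 : θs ∈ Metric.closedBall θs ‖θ - θs‖ := by
    simp [Metric.mem_closedBall]
  have hmem2 : θ ∈ Metric.closedBall θs ‖θ - θs‖ := by
    simp [Metric.mem_closedBall, dist_eq_norm]
  have key := (convex_closedBall θs ‖θ - θs‖).norm_image_sub_le_of_norm_fderiv_le'
    (f := gradient f) (φ := fderiv ℝ (gradient f) θs) (C := H * ‖θ - θs‖)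
    (fun x _ => hgdiff x)
    (fun x hx => by
      rw [fderiv_diff_norm]
      calc opNormM (hessMat f x - hessMat f θs) ≤ H * ‖x - θs‖ := hH x θs
        _ ≤ H * ‖θ - θs‖ := by
            apply mul_le_mul_of_nonneg_left _ hH0
            simpa [Metric.mem_closedBall, dist_eq_norm] using hx)
    hmem1 hmem2
  rw [hgrad, sub_zero] at key
  calc ‖gradient f θ - fderiv ℝ (gradient f) θs (θ - θs)‖ ≤ H * ‖θ - θs‖ * ‖θ - θs‖ := key
    _ = H * ‖θ - θs‖ ^ 2 := by ring

lemma inner_int_matrix (ρ : Measure (EuclideanSpace ℝ (Fin d)))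
    (F : EuclideanSpace ℝ (Fin d) → EuclideanSpace ℝ (Fin d))
    (hint : ∀ i j, Integrable (fun θ => F θ i * F θ j) ρ) (v : EuclideanSpace ℝ (Fin d)) :
    ⟪v, Matrix.toEuclideanLin (Matrix.of fun i j => ∫ θ, F θ i * F θ j ∂ρ) v⟫ =
      ∫ θ, ⟪F θ, v⟫ ^ 2 ∂ρ := by
  have hterm : ∀ i j : Fin d, Integrable (fun θ => v i * (F θ i * F θ j * v j)) ρ :=
    fun i j => ((hint i j).mul_const (v j)).const_mul (v i)
  have step : ∀ θ : EuclideanSpace ℝ (Fin d),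
      ⟪F θ, v⟫ ^ 2 = ∑ i, ∑ j, v i * (F θ i * F θ j * v j) := by
    intro θ
    rw [inner_euclid, pow_two, Finset.sum_mul_sum]
    exact Finset.sum_congr rfl fun i _ => Finset.sum_congr rfl fun j _ => by ring
  rw [inner_euclid]
  rw [MeasureTheory.integral_congr_ae (Filter.Eventually.of_forall step)]
  rw [MeasureTheory.integral_finset_sum _ (fun i _ =>
    MeasureTheory.integrable_finset_sum _ (fun j _ => hterm i j))]
  refine Finset.sum_congr rfl fun i _ => ?_
  rw [MeasureTheory.integral_finset_sum _ (fun j _ => hterm i j)]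
  rw [euclid_apply, Finset.mul_sum]
  refine Finset.sum_congr rfl fun j _ => ?_
  rw [integral_const_mul, integral_mul_const]
  simp only [Matrix.of_apply]

lemma sq_inner_integrable (ρ : Measure (EuclideanSpace ℝ (Fin d)))
    (F : EuclideanSpace ℝ (Fin d) → EuclideanSpace ℝ (Fin d))
    (hint : ∀ i j, Integrable (fun θ => F θ i * F θ j) ρ) (v : EuclideanSpace ℝ (Fin d)) :
    Integrable (fun θ => ⟪F θ, v⟫ ^ 2) ρ := by
  have step : (fun θ : EuclideanSpace ℝ (Fin d) => ⟪F θ, v⟫ ^ 2) =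
      fun θ => ∑ i, ∑ j, v i * (F θ i * F θ j * v j) := by
    funext θ
    rw [inner_euclid, pow_two, Finset.sum_mul_sum]
    exact Finset.sum_congr rfl fun i _ => Finset.sum_congr rfl fun j _ => by ring
  rw [step]
  exact MeasureTheory.integrable_finset_sum _ (fun i _ =>
    MeasureTheory.integrable_finset_sum _ (fun j _ =>
      ((hint i j).mul_const (v j)).const_mul (v i)))

lemma conj_int_matrix (ρ : Measure (EuclideanSpace ℝ (Fin d)))
    (W : EuclideanSpace ℝ (Fin d) → EuclideanSpace ℝ (Fin d))
    (hint : ∀ k l, Integrable (fun θ => W θ k * W θ l) ρ) (A : Matrix (Fin d) (Fin d) ℝ) :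
    A * (Matrix.of fun k l => ∫ θ, W θ k * W θ l ∂ρ) * Aᵀ =
      Matrix.of fun i j =>
        ∫ θ, Matrix.toEuclideanLin A (W θ) i * Matrix.toEuclideanLin A (W θ) j ∂ρ := by
  ext i j
  have hterm : ∀ l k : Fin d, Integrable (fun θ => A i l * A j k * (W θ l * W θ k)) ρ :=
    fun l k => (hint l k).const_mul _
  have step : ∀ θ : EuclideanSpace ℝ (Fin d),
      Matrix.toEuclideanLin A (W θ) i * Matrix.toEuclideanLin A (W θ) j =
        ∑ l, ∑ k, A i l * A j k * (W θ l * W θ k) := by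
    intro θ
    rw [euclid_apply, euclid_apply, Finset.sum_mul_sum]
    exact Finset.sum_congr rfl fun l _ => Finset.sum_congr rfl fun k _ => by ring
  simp only [Matrix.of_apply]
  rw [MeasureTheory.integral_congr_ae (Filter.Eventually.of_forall step)]
  rw [MeasureTheory.integral_finset_sum _ (fun l _ =>
    MeasureTheory.integrable_finset_sum _ (fun k _ => hterm l k))]
  refine Eq.trans ?_ (Finset.sum_congr rfl fun l _ =>
    (MeasureTheory.integral_finset_sum _ (fun k _ => hterm l k)).symm)
  rw [Finset.sum_comm, Matrix.mul_apply]
  refine Finset.sum_congr rfl fun k _ => ?_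
  rw [Matrix.mul_apply, Finset.sum_mul]
  refine Finset.sum_congr rfl fun l _ => ?_
  rw [integral_const_mul, Matrix.of_apply, Matrix.transpose_apply]
  ring

lemma Smat_eq (ρ : Measure (EuclideanSpace ℝ (Fin d))) [IsProbabilityMeasure ρ]
    (θs : EuclideanSpace ℝ (Fin d)) (c : ℝ)
    (hmeanInt : ∀ i, Integrable (fun θ : EuclideanSpace ℝ (Fin d) => θ i) ρ)
    (hmean : ∀ i, ∫ θ, θ i ∂ρ = 0)
    (hcovInt : ∀ i j, Integrable (fun θ : EuclideanSpace ℝ (Fin d) => θ i * θ j) ρ)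
    (hcov : ∀ i j, ∫ θ, θ i * θ j ∂ρ = if i = j then c ^ 2 else 0) :
    (Matrix.of fun k l => ∫ θ, (θ k - θs k) * (θ l - θs l) ∂ρ) =
      c ^ 2 • (1 : Matrix (Fin d) (Fin d) ℝ) + Matrix.vecMulVec θs θs := by
  ext k l
  have hexp : ∀ θ : EuclideanSpace ℝ (Fin d),
      (θ k - θs k) * (θ l - θs l) =
        θ k * θ l - θs l * θ k - θs k * θ l + θs k * θs l := fun θ => by ring
  simp only [Matrix.of_apply]
  rw [MeasureTheory.integral_congr_ae (Filter.Eventually.of_forall hexp)]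
  have h2 : Integrable (fun θ : EuclideanSpace ℝ (Fin d) => θ k * θ l - θs l * θ k) ρ :=
    (hcovInt k l).sub ((hmeanInt k).const_mul (θs l))
  have h1 : Integrable (fun θ : EuclideanSpace ℝ (Fin d) =>
      θ k * θ l - θs l * θ k - θs k * θ l) ρ := h2.sub ((hmeanInt l).const_mul (θs k))
  rw [MeasureTheory.integral_add h1 (integrable_const _)]
  rw [MeasureTheory.integral_sub h2 ((hmeanInt l).const_mul (θs k))]
  rw [MeasureTheory.integral_sub (hcovInt k l) ((hmeanInt k).const_mul (θs l))]
  rw [integral_const_mul, integral_const_mul, hcov, hmean, hmean, integral_const]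
  simp [Matrix.add_apply, Matrix.smul_apply, Matrix.one_apply, Matrix.vecMulVec_apply]

end Helpers

set_option maxHeartbeats 2000000 in
/-- Under a Lipschitz-Hessian assumption, for a stationary point `θ*` with PSD
Hessian and a mean-zero measure `ρ` with covariance `c²I`, `c ≥ ‖θ*‖`, the EGOP decomposes as
`EGOP(f) = H(θ*) + E_f(θ*)` with `H(θ*) = ∇²f(θ*)(c²I + θ*θ*ᵀ)∇²f(θ*)ᵀ` PSD satisfying
`c²∇²f(θ*)∇²f(θ*)ᵀ ⪯ H(θ*) ⪯ 2c²∇²f(θ*)∇²f(θ*)ᵀ` and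
`|⟨v, E_f(θ*) v⟩| ≤ (2√d·H·λ_max(∇²f(θ*))·M₃ + d·H²·M₄)‖v‖²`. -/
theorem EGOP_eq_hessian_term_add_error
    (d : ℕ) (f : EuclideanSpace ℝ (Fin d) → ℝ) (H c : ℝ)
    (hf : ContDiff ℝ 3 f) (hH : HessLipschitz f H)
    (θs : EuclideanSpace ℝ (Fin d)) (hgrad : gradient f θs = 0)
    (hpsd : (hessMat f θs).PosSemidef)
    (ρ : Measure (EuclideanSpace ℝ (Fin d))) [IsProbabilityMeasure ρ]
    (hIntEGOP : ∀ i j, Integrable (fun θ => gradient f θ i * gradient f θ j) ρ)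
    (hmeanInt : ∀ i, Integrable (fun θ : EuclideanSpace ℝ (Fin d) => θ i) ρ)
    (hmean : ∀ i, ∫ θ, θ i ∂ρ = 0)
    (hcovInt : ∀ i j, Integrable (fun θ : EuclideanSpace ℝ (Fin d) => θ i * θ j) ρ)
    (hcov : ∀ i j, ∫ θ, θ i * θ j ∂ρ = if i = j then c ^ 2 else 0)
    (hc : ‖θs‖ ≤ c)
    (hM3 : Integrable (fun θ : EuclideanSpace ℝ (Fin d) => ‖θ - θs‖ ^ 3) ρ)
    (hM4 : Integrable (fun θ : EuclideanSpace ℝ (Fin d) => ‖θ - θs‖ ^ 4) ρ) :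
    ∃ E : Matrix (Fin d) (Fin d) ℝ,
      EGOP f ρ =
          hessMat f θs * (c ^ 2 • (1 : Matrix (Fin d) (Fin d) ℝ) + Matrix.vecMulVec θs θs) *
            (hessMat f θs)ᵀ + E ∧
      (hessMat f θs * (c ^ 2 • (1 : Matrix (Fin d) (Fin d) ℝ) + Matrix.vecMulVec θs θs) *
          (hessMat f θs)ᵀ).PosSemidef ∧
      (hessMat f θs * (c ^ 2 • (1 : Matrix (Fin d) (Fin d) ℝ) + Matrix.vecMulVec θs θs) *
          (hessMat f θs)ᵀ - c ^ 2 • (hessMat f θs * (hessMat f θs)ᵀ)).PosSemidef ∧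
      ((2 * c ^ 2) • (hessMat f θs * (hessMat f θs)ᵀ) -
          hessMat f θs * (c ^ 2 • (1 : Matrix (Fin d) (Fin d) ℝ) + Matrix.vecMulVec θs θs) *
            (hessMat f θs)ᵀ).PosSemidef ∧
      ∀ v : EuclideanSpace ℝ (Fin d),
        |⟪v, Matrix.toEuclideanLin E v⟫| ≤
          (2 * Real.sqrt d * H * lambdaMax (hessMat f θs) * (∫ θ, ‖θ - θs‖ ^ 3 ∂ρ) +
              d * H ^ 2 * (∫ θ, ‖θ - θs‖ ^ 4 ∂ρ)) * ‖v‖ ^ 2 := by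
  classical
  set A := hessMat f θs with hA
  set Hm := A * (c ^ 2 • (1 : Matrix (Fin d) (Fin d) ℝ) + Matrix.vecMulVec θs θs) * Aᵀ with hHm
  obtain ⟨p1, p2, p3⟩ := psd_all A θs hc
  refine ⟨EGOP f ρ - Hm, by abel, p1, p2, p3, ?_⟩
  intro v
  -- trivial dimension-zero case
  rcases Nat.eq_zero_or_pos d with hd0 | hd
  · subst hd0
    have hv : v = 0 := Subsingleton.elim v 0
    subst hv
    simp
  -- main case
  have hH0 : 0 ≤ H := by
    have h1 := hH (EuclideanSpace.single ⟨0, hd⟩ (1:ℝ)) (0 : EuclideanSpace ℝ (Fin d))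
    have hnorm : ‖(EuclideanSpace.single ⟨0, hd⟩ (1:ℝ)) - (0 : EuclideanSpace ℝ (Fin d))‖ = 1 := by
      rw [sub_zero, EuclideanSpace.norm_single, norm_one]
    rw [hnorm, mul_one] at h1
    exact le_trans (norm_nonneg _) h1
  set lam := lambdaMax A with hlamdef
  have hlam0 : 0 ≤ lam := lam_nonneg hd hpsd
  set w : EuclideanSpace ℝ (Fin d) → EuclideanSpace ℝ (Fin d) := fun θ => θ - θs with hw
  set Aw : EuclideanSpace ℝ (Fin d) → EuclideanSpace ℝ (Fin d) :=
    fun θ => Matrix.toEuclideanLin A (w θ) with hAw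
  have hwInt : ∀ k l, Integrable (fun θ => w θ k * w θ l) ρ := by
    intro k l
    have heq : (fun θ : EuclideanSpace ℝ (Fin d) => w θ k * w θ l) =
        fun θ => θ k * θ l - θs l * θ k - θs k * θ l + θs k * θs l := by
      funext θ
      show (θ k - θs k) * (θ l - θs l) = _
      ring
    rw [heq]
    have h2 : Integrable (fun θ : EuclideanSpace ℝ (Fin d) => θ k * θ l - θs l * θ k) ρ :=
      (hcovInt k l).sub ((hmeanInt k).const_mul (θs l))
    have h1 : Integrable (fun θ : EuclideanSpace ℝ (Fin d) =>
        θ k * θ l - θs l * θ k - θs k * θ l) ρ := h2.sub ((hmeanInt l).const_mul (θs k))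
    exact h1.add (integrable_const _)
  have hAwInt : ∀ i j, Integrable (fun θ => Aw θ i * Aw θ j) ρ := by
    intro i j
    have heq : (fun θ : EuclideanSpace ℝ (Fin d) => Aw θ i * Aw θ j) =
        fun θ => ∑ l, ∑ k, A i l * A j k * (w θ l * w θ k) := by
      funext θ
      rw [hAw]
      show Matrix.toEuclideanLin A (w θ) i * Matrix.toEuclideanLin A (w θ) j = _
      rw [euclid_apply, euclid_apply, Finset.sum_mul_sum]
      exact Finset.sum_congr rfl fun l _ => Finset.sum_congr rfl fun k _ => by ring
    rw [heq]
    exact MeasureTheory.integrable_finset_sum _ (fun l _ =>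
      MeasureTheory.integrable_finset_sum _ (fun k _ => (hwInt l k).const_mul _))
  -- matrix identity for Hm
  have hMatId : Hm = Matrix.of (fun i j => ∫ θ, Aw θ i * Aw θ j ∂ρ) := by
    rw [hHm, ← Smat_eq ρ θs c hmeanInt hmean hcovInt hcov]
    exact conj_int_matrix ρ w hwInt A
  -- express the quadratic form as an integral
  have hEG : ⟪v, Matrix.toEuclideanLin (EGOP f ρ) v⟫ = ∫ θ, ⟪gradient f θ, v⟫ ^ 2 ∂ρ :=
    inner_int_matrix ρ (gradient f) hIntEGOP v
  have hHmv : ⟪v, Matrix.toEuclideanLin Hm v⟫ = ∫ θ, ⟪Aw θ, v⟫ ^ 2 ∂ρ := by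
    rw [hMatId]
    exact inner_int_matrix ρ Aw hAwInt v
  have hgsqInt : Integrable (fun θ => ⟪gradient f θ, v⟫ ^ 2) ρ :=
    sq_inner_integrable ρ (gradient f) hIntEGOP v
  have hAwsqInt : Integrable (fun θ => ⟪Aw θ, v⟫ ^ 2) ρ :=
    sq_inner_integrable ρ Aw hAwInt v
  have hqInt : Integrable (fun θ => ⟪gradient f θ, v⟫ ^ 2 - ⟪Aw θ, v⟫ ^ 2) ρ :=
    hgsqInt.sub hAwsqInt
  have hinner : ⟪v, Matrix.toEuclideanLin (EGOP f ρ - Hm) v⟫ =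
      ∫ θ, (⟪gradient f θ, v⟫ ^ 2 - ⟪Aw θ, v⟫ ^ 2) ∂ρ := by
    rw [_root_.map_sub, LinearMap.sub_apply, inner_sub_right, hEG, hHmv]
    rw [MeasureTheory.integral_sub hgsqInt hAwsqInt]
  -- pointwise bound
  have hpt : ∀ θ : EuclideanSpace ℝ (Fin d),
      |⟪gradient f θ, v⟫ ^ 2 - ⟪Aw θ, v⟫ ^ 2| ≤
        (2 * lam * H * ‖θ - θs‖ ^ 3 + H ^ 2 * ‖θ - θs‖ ^ 4) * ‖v‖ ^ 2 := by
    intro θ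
    set b := ⟪Aw θ, v⟫ with hb
    set s := ⟪gradient f θ - Aw θ, v⟫ with hs
    have hgbv : ⟪gradient f θ, v⟫ = b + s := by
      rw [hs, inner_sub_left, hb]; ring
    have hbbd : |b| ≤ lam * ‖θ - θs‖ * ‖v‖ := by
      rw [hb, hAw]
      exact rayleigh_abs hd hpsd (w θ) v
    have hsbd : |s| ≤ (H * ‖θ - θs‖ ^ 2) * ‖v‖ := by
      have h1 : |s| ≤ ‖gradient f θ - Aw θ‖ * ‖v‖ := abs_real_inner_le_norm _ _
      have h2 : ‖gradient f θ - Aw θ‖ ≤ H * ‖θ - θs‖ ^ 2 := by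
        have hfd : Aw θ = fderiv ℝ (gradient f) θs (θ - θs) := by
          rw [hAw, ← hess_clm f θs]; rfl
        rw [hfd]
        exact taylor_grad f H hH0 hf hH θs θ hgrad
      exact le_trans h1 (mul_le_mul_of_nonneg_right h2 (norm_nonneg _))
    have hid : ⟪gradient f θ, v⟫ ^ 2 - b ^ 2 = s ^ 2 + 2 * b * s := by
      rw [hgbv]; ring
    rw [hid]
    have habs : |s ^ 2 + 2 * b * s| ≤ |s| ^ 2 + 2 * |b| * |s| := by
      calc |s ^ 2 + 2 * b * s| ≤ |s ^ 2| + |2 * b * s| := abs_add_le _ _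
        _ = |s| ^ 2 + 2 * |b| * |s| := by
            rw [abs_pow, abs_mul, abs_mul, abs_two]
    have h1 : |s| ^ 2 ≤ ((H * ‖θ - θs‖ ^ 2) * ‖v‖) ^ 2 :=
      pow_le_pow_left₀ (abs_nonneg s) hsbd 2
    have h2 : 2 * |b| * |s| ≤ 2 * (lam * ‖θ - θs‖ * ‖v‖) * ((H * ‖θ - θs‖ ^ 2) * ‖v‖) := by
      have hmul := mul_le_mul hbbd hsbd (abs_nonneg s)
        (mul_nonneg (mul_nonneg hlam0 (norm_nonneg _)) (norm_nonneg _))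
      linarith
    calc |s ^ 2 + 2 * b * s| ≤ |s| ^ 2 + 2 * |b| * |s| := habs
      _ ≤ ((H * ‖θ - θs‖ ^ 2) * ‖v‖) ^ 2 +
          2 * (lam * ‖θ - θs‖ * ‖v‖) * ((H * ‖θ - θs‖ ^ 2) * ‖v‖) := by linarith
      _ = (2 * lam * H * ‖θ - θs‖ ^ 3 + H ^ 2 * ‖θ - θs‖ ^ 4) * ‖v‖ ^ 2 := by ring
  -- integrate the bound
  have hrhsInt : Integrable (fun θ : EuclideanSpace ℝ (Fin d) =>
      (2 * lam * H * ‖θ - θs‖ ^ 3 + H ^ 2 * ‖θ - θs‖ ^ 4) * ‖v‖ ^ 2) ρ :=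
    ((hM3.const_mul _).add (hM4.const_mul _)).mul_const _
  have hintbd : |∫ θ, (⟪gradient f θ, v⟫ ^ 2 - ⟪Aw θ, v⟫ ^ 2) ∂ρ| ≤
      (2 * lam * H * (∫ θ, ‖θ - θs‖ ^ 3 ∂ρ) + H ^ 2 * (∫ θ, ‖θ - θs‖ ^ 4 ∂ρ)) * ‖v‖ ^ 2 := by
    have step1 : |∫ θ, (⟪gradient f θ, v⟫ ^ 2 - ⟪Aw θ, v⟫ ^ 2) ∂ρ| ≤
        ∫ θ, |⟪gradient f θ, v⟫ ^ 2 - ⟪Aw θ, v⟫ ^ 2| ∂ρ :=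
      MeasureTheory.norm_integral_le_integral_norm
        (μ := ρ) (fun θ => ⟪gradient f θ, v⟫ ^ 2 - ⟪Aw θ, v⟫ ^ 2)
    have step2 : ∫ θ, |⟪gradient f θ, v⟫ ^ 2 - ⟪Aw θ, v⟫ ^ 2| ∂ρ ≤
        ∫ θ, (2 * lam * H * ‖θ - θs‖ ^ 3 + H ^ 2 * ‖θ - θs‖ ^ 4) * ‖v‖ ^ 2 ∂ρ :=
      MeasureTheory.integral_mono hqInt.abs hrhsInt hpt
    have step3 : ∫ θ, (2 * lam * H * ‖θ - θs‖ ^ 3 + H ^ 2 * ‖θ - θs‖ ^ 4) * ‖v‖ ^ 2 ∂ρ =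
        (2 * lam * H * (∫ θ, ‖θ - θs‖ ^ 3 ∂ρ) + H ^ 2 * (∫ θ, ‖θ - θs‖ ^ 4 ∂ρ)) * ‖v‖ ^ 2 := by
      rw [integral_mul_const]
      congr 1
      rw [MeasureTheory.integral_add (hM3.const_mul _) (hM4.const_mul _),
        integral_const_mul, integral_const_mul]
    exact le_trans step1 (le_trans step2 (le_of_eq step3))
  -- final comparison of constants
  have hM3nn : 0 ≤ ∫ θ, ‖θ - θs‖ ^ 3 ∂ρ :=
    MeasureTheory.integral_nonneg (fun θ => by positivity)
  have hM4nn : 0 ≤ ∫ θ, ‖θ - θs‖ ^ 4 ∂ρ :=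
    MeasureTheory.integral_nonneg (fun θ => by positivity)
  have hsqrt : (1:ℝ) ≤ Real.sqrt d := by
    rw [show (1:ℝ) = Real.sqrt 1 by rw [Real.sqrt_one]]
    exact Real.sqrt_le_sqrt (by exact_mod_cast hd)
  have hdge : (1:ℝ) ≤ (d:ℝ) := by exact_mod_cast hd
  have hconst : (2 * lam * H * (∫ θ, ‖θ - θs‖ ^ 3 ∂ρ) + H ^ 2 * (∫ θ, ‖θ - θs‖ ^ 4 ∂ρ)) ≤
      (2 * Real.sqrt d * H * lam * (∫ θ, ‖θ - θs‖ ^ 3 ∂ρ) +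
        d * H ^ 2 * (∫ θ, ‖θ - θs‖ ^ 4 ∂ρ)) := by
    have t1 : 2 * lam * H * (∫ θ, ‖θ - θs‖ ^ 3 ∂ρ) ≤
        2 * Real.sqrt d * H * lam * (∫ θ, ‖θ - θs‖ ^ 3 ∂ρ) := by
      nlinarith [mul_nonneg (mul_nonneg hlam0 hH0) hM3nn]
    have t2 : H ^ 2 * (∫ θ, ‖θ - θs‖ ^ 4 ∂ρ) ≤ d * H ^ 2 * (∫ θ, ‖θ - θs‖ ^ 4 ∂ρ) := by
      nlinarith [mul_nonneg (mul_nonneg hH0 hH0) hM4nn, sq_nonneg H]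
    linarith
  calc |⟪v, Matrix.toEuclideanLin (EGOP f ρ - Hm) v⟫|
      = |∫ θ, (⟪gradient f θ, v⟫ ^ 2 - ⟪Aw θ, v⟫ ^ 2) ∂ρ| := by rw [hinner]
    _ ≤ (2 * lam * H * (∫ θ, ‖θ - θs‖ ^ 3 ∂ρ) + H ^ 2 * (∫ θ, ‖θ - θs‖ ^ 4 ∂ρ)) * ‖v‖ ^ 2 :=
        hintbd
    _ ≤ (2 * Real.sqrt d * H * lam * (∫ θ, ‖θ - θs‖ ^ 3 ∂ρ) +
          d * H ^ 2 * (∫ θ, ‖θ - θs‖ ^ 4 ∂ρ)) * ‖v‖ ^ 2 :=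
        mul_le_mul_of_nonneg_right hconst (by positivity)


end
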